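/- arXiv:1304.1652 — 5 statements merged into one kernel-verified Lean document; each statement's English description precedes it below -/
import Mathlib

section
/- Let U ⊆ ℂ be a connected open set and let f : ℂ → ℝ be harmonic on U and not constant on U. Then every critical point of f in U is isolated: if z₀ ∈ U satisfies ∇f(z₀) = 0, then there exists ε > 0 such that ∇f(z) ≠ 0 for every z ∈ U with 0 < |z − z₀| < ε. -/
/-- `f : ℂ → ℝ` is harmonic on the open set `U ⊆ ℂ`: it is twice continuously
differentiable on `U` and its Laplacian `∂²f/∂x² + ∂²f/∂y²` vanishes on `U`
(identifying `ℂ` with `ℝ²` with real basis `1, I`). -/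
def HarmonicOnC (f : ℂ → ℝ) (U : Set ℂ) : Prop :=
  ContDiffOn ℝ 2 f U ∧ ∀ z ∈ U,
    iteratedFDeriv ℝ 2 f z ![1, 1] + iteratedFDeriv ℝ 2 f z ![Complex.I, Complex.I] = 0

/-- The continuous real-linear map sending `T : ℂ →L[ℝ] ℝ` to `T 1 - I * T I : ℂ`. -/
noncomputable def PhiAux : (ℂ →L[ℝ] ℝ) →L[ℝ] ℂ :=
  Complex.ofRealCLM.comp (ContinuousLinearMap.apply ℝ ℝ (1:ℂ)) -
    Complex.I • Complex.ofRealCLM.comp (ContinuousLinearMap.apply ℝ ℝ Complex.I)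

lemma PhiAux_apply (T : ℂ →L[ℝ] ℝ) :
    PhiAux T = (T 1 : ℂ) - Complex.I * (T Complex.I) := by
  simp [PhiAux, smul_eq_mul]

/-- A real-linear continuous map on `ℂ` vanishing at `1` and `I` is zero. -/
lemma clm_eq_zero_aux (T : ℂ →L[ℝ] ℝ) (h1 : T 1 = 0) (hI : T Complex.I = 0) : T = 0 := by
  ext w
  have hw : w = w.re • (1:ℂ) + w.im • Complex.I := by
    simp only [Complex.real_smul, mul_one]
    exact_mod_cast (Complex.re_add_im w).symm
  rw [ContinuousLinearMap.zero_apply, hw, map_add, map_smul, map_smul, h1, hI]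
  simp

/-- The critical points of a nonconstant harmonic function on a connected open
set `U ⊆ ℂ` are isolated. Here `gradient f` is the Euclidean gradient of `f` on
`ℂ ≅ ℝ²`. -/
theorem isolated_critical_points_of_harmonic
    (U : Set ℂ) (hU : IsOpen U) (hUconn : IsConnected U)
    (f : ℂ → ℝ) (hf : HarmonicOnC f U)
    (hnc : ¬ ∃ c : ℝ, ∀ z ∈ U, f z = c)
    (z₀ : ℂ) (hz₀ : z₀ ∈ U) (hcrit : gradient f z₀ = 0) :
    ∃ ε > 0, ∀ z ∈ U, 0 < ‖z - z₀‖ → ‖z - z₀‖ < ε →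
      gradient f z ≠ 0 := by
  obtain ⟨hC2, hlap⟩ := hf
  set u' : ℂ → (ℂ →L[ℝ] ℝ) := fderiv ℝ f with hu'def
  have hu'C : ContDiffOn ℝ 1 u' U := hC2.fderiv_of_isOpen hU (by norm_num)
  have hfd : ∀ z ∈ U, DifferentiableAt ℝ f z := fun z hz =>
    ((hC2.differentiableOn (by norm_num)) z hz).differentiableAt (hU.mem_nhds hz)
  have hu'd : ∀ z ∈ U, DifferentiableAt ℝ u' z := fun z hz =>
    ((hu'C.differentiableOn one_ne_zero) z hz).differentiableAt (hU.mem_nhds hz)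
  set g : ℂ → ℂ := fun z => PhiAux (u' z) with hgdef
  -- `g` is complex differentiable on `U` (Cauchy–Riemann)
  have hgdiff : DifferentiableOn ℂ g U := by
    intro z hz
    have hB : HasFDerivAt u' (fderiv ℝ u' z) z := (hu'd z hz).hasFDerivAt
    set B := fderiv ℝ u' z with hBdef
    have hsymm : ∀ v w : ℂ, B v w = B w v := by
      intro v w
      apply second_derivative_symmetric_of_eventually_of_real (f := f) (f' := u') ?_ hB
      filter_upwards [hU.mem_nhds hz] with y hy
      exact (hfd y hy).hasFDerivAt
    have hlapz : B 1 1 + B Complex.I Complex.I = 0 := by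
      have h := hlap z hz
      rw [iteratedFDeriv_two_apply, iteratedFDeriv_two_apply] at h
      simpa using h
    have hL : HasFDerivAt g (PhiAux.comp B) z := PhiAux.hasFDerivAt.comp z hB
    set c : ℂ := PhiAux (B 1) with hcdef
    have hLI : PhiAux (B Complex.I) = Complex.I * c := by
      rw [hcdef, PhiAux_apply, PhiAux_apply, hsymm Complex.I 1]
      have hII : (B Complex.I Complex.I : ℝ) = - B 1 1 := by linarith
      rw [hII]
      push_cast
      ring_nf
      rw [Complex.I_sq]
      ring
    have hM : HasFDerivAt g ((1 : ℂ →L[ℂ] ℂ).smulRight c) z := by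
      apply hasFDerivAt_of_restrictScalars ℝ hL
      ext w
      have hw : w = w.re • (1:ℂ) + w.im • Complex.I := by
        simp only [Complex.real_smul, mul_one]
        exact_mod_cast (Complex.re_add_im w).symm
      have hrhs : PhiAux (B w) = (w.re : ℂ) * c + (w.im : ℂ) * (Complex.I * c) := by
        conv_lhs => rw [hw]
        rw [map_add, map_smul, map_smul, map_add, map_smul, map_smul, hLI]
        simp [Complex.real_smul, hcdef]
      have hlhs : w * c = ((w.re : ℂ) + (w.im : ℂ) * Complex.I) * c := by
        rw [Complex.re_add_im]
      simp only [ContinuousLinearMap.coe_restrictScalars', ContinuousLinearMap.smulRight_apply,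
        ContinuousLinearMap.one_apply, ContinuousLinearMap.coe_comp', Function.comp_apply,
        smul_eq_mul]
      rw [hrhs, hlhs]
      ring
    exact hM.differentiableAt.differentiableWithinAt
  have hgan : AnalyticOnNhd ℂ g U := hgdiff.analyticOnNhd hU
  rcases (hgan z₀ hz₀).eventually_eq_zero_or_eventually_ne_zero with h0 | hne
  · -- `g` vanishes near `z₀`, hence on all of `U`; then `f` is constant: contradiction
    exfalso
    have hg0 : Set.EqOn g 0 U :=
      hgan.eqOn_zero_of_preconnected_of_eventuallyEq_zero hUconn.isPreconnected hz₀ h0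
    have hfder0 : ∀ z ∈ U, u' z = 0 := by
      intro z hz
      have h := hg0 hz
      rw [hgdef] at h
      simp only [Pi.zero_apply] at h
      rw [PhiAux_apply] at h
      have hre := congrArg Complex.re h
      have him := congrArg Complex.im h
      simp at hre him
      exact clm_eq_zero_aux _ hre (by linarith)
    haveI : PreconnectedSpace U := Subtype.preconnectedSpace hUconn.isPreconnected
    have hlc : IsLocallyConstant (fun p : U => f p) := by
      rw [IsLocallyConstant.iff_eventually_eq]
      intro x
      obtain ⟨r, hr0, hrU⟩ := Metric.isOpen_iff.1 hU x x.2
      have hball : ∀ᶠ y in nhds (x : ℂ), f y = f x := by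
        filter_upwards [Metric.ball_mem_nhds (x : ℂ) hr0] with y hy
        refine (convex_ball (x:ℂ) r).is_const_of_fderivWithin_eq_zero
          (fun w hw => (hfd w (hrU hw)).differentiableWithinAt) ?_ hy
          (Metric.mem_ball_self hr0)
        intro w hw
        rw [fderivWithin_of_isOpen Metric.isOpen_ball hw]
        exact hfder0 w (hrU hw)
      exact (continuous_subtype_val.tendsto x).eventually hball
    exact hnc ⟨f z₀, fun z hz => hlc.apply_eq_of_preconnectedSpace ⟨z, hz⟩ ⟨z₀, hz₀⟩⟩
  · rw [eventually_nhdsWithin_iff, Metric.eventually_nhds_iff] at hne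
    obtain ⟨ε, hε, h⟩ := hne
    refine ⟨ε, hε, fun z hz hpos hlt => ?_⟩
    have hzne : z ≠ z₀ := by
      intro e
      rw [e] at hpos
      simp at hpos
    have hg : g z ≠ 0 := by
      refine h ?_ hzne
      rwa [Complex.dist_eq]
    intro hgrad
    apply hg
    have hfz : fderiv ℝ f z = 0 := by
      have h2 := congrArg (InnerProductSpace.toDual ℝ ℂ) hgrad
      simpa [gradient] using h2
    rw [hgdef]
    simp only [hu'def, hfz, map_zero]
end

section
/- Let X be a nonempty compact metric space, let φ : ℝ × X → X be a continuous flow on X, and let V : X → ℝ be a continuous function that is a strict Lyapunov function for φ: for every point x that is not a fixed point of φ and every t > 0 one has V(φ(t, x)) > V(x). Assume the set of fixed points of φ is totally disconnected. Then for every x ∈ X there exists a fixed point p of φ such that φ(t, x) → p as t → +∞; in particular the ω-limit set of every point is a single fixed point. -/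
open Set Filter Topology omegaLimit

/-- A decreasing intersection of compact preconnected sets in a T4 space is preconnected. -/
lemma preconnected_iInter_of_antitone {Y : Type*} [TopologicalSpace Y] [T4Space Y]
    (K : ℕ → Set Y) (hanti : Antitone K) (hcomp : ∀ n, IsCompact (K n))
    (hconn : ∀ n, IsPreconnected (K n)) : IsPreconnected (⋂ n, K n) := by
  set S := ⋂ n, K n with hS
  intro u v hu hv hcover ⟨a, haS, hau⟩ ⟨b, hbS, hbv⟩
  by_contra hne
  rw [not_nonempty_iff_eq_empty] at hne
  -- A and B: the parts of S missing v and u respectively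
  have hSclosed : IsClosed S := isClosed_iInter fun n => (hcomp n).isClosed
  set A := S \ v with hA
  set B := S \ u with hB
  have hAclosed : IsClosed A := hSclosed.sdiff hv
  have hBclosed : IsClosed B := hSclosed.sdiff hu
  have hdisj : Disjoint A B := by
    rw [Set.disjoint_iff]
    rintro y ⟨⟨hyS, hyv⟩, _, hyu⟩
    exact absurd (hcover hyS) (by simp [hyu, hyv])
  obtain ⟨u', v', hu', hv', hAu', hBv', hdisj'⟩ :=
    NormalSpace.normal A B hAclosed hBclosed hdisj
  have haA : a ∈ A := ⟨haS, fun hav => by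
    have : a ∈ S ∩ (u ∩ v) := ⟨haS, hau, hav⟩
    simp [hne] at this⟩
  have hbB : b ∈ B := ⟨hbS, fun hbu => by
    have : b ∈ S ∩ (u ∩ v) := ⟨hbS, hbu, hbv⟩
    simp [hne] at this⟩
  have hScover : S ⊆ u' ∪ v' := by
    intro y hyS
    by_cases hyu : y ∈ u
    · by_cases hyv : y ∈ v
      · have : y ∈ S ∩ (u ∩ v) := ⟨hyS, hyu, hyv⟩
        simp [hne] at this
      · exact Or.inl (hAu' ⟨hyS, hyv⟩)
    · exact Or.inr (hBv' ⟨hyS, hyu⟩)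
  -- some K n is contained in u' ∪ v'
  have hKn : ∃ n, K n ⊆ u' ∪ v' := by
    by_contra h
    push_neg at h
    have hC : ∀ n, (K n \ (u' ∪ v')).Nonempty := by
      intro n
      rcases Set.not_subset.1 (h n) with ⟨y, hy1, hy2⟩
      exact ⟨y, hy1, hy2⟩
    have hCc : ∀ n, IsClosed (K n \ (u' ∪ v')) :=
      fun n => (hcomp n).isClosed.sdiff (hu'.union hv')
    have := IsCompact.nonempty_iInter_of_directed_nonempty_isCompact_isClosed
      (fun n => K n \ (u' ∪ v'))
      (fun m n => ⟨max m n, fun y hy => ⟨hanti (le_max_left m n) hy.1, hy.2⟩,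
        fun y hy => ⟨hanti (le_max_right m n) hy.1, hy.2⟩⟩)
      hC (fun n => ((hcomp n).inter_right (hu'.union hv').isClosed_compl)) hCc
    rcases this with ⟨y, hy⟩
    simp only [Set.mem_iInter, Set.mem_diff] at hy
    have hyS : y ∈ S := Set.mem_iInter.2 fun n => (hy n).1
    exact (hy 0).2 (hScover hyS)
  rcases hKn with ⟨n, hKn⟩
  have haK : a ∈ K n := Set.mem_iInter.1 haS n
  have hbK : b ∈ K n := Set.mem_iInter.1 hbS n
  have := hconn n u' v' hu' hv' hKn ⟨a, haK, hAu' haA⟩ ⟨b, hbK, hBv' hbB⟩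
  rcases this with ⟨y, _, hyu', hyv'⟩
  exact Set.disjoint_iff.1 hdisj' ⟨hyu', hyv'⟩

/-- Every trajectory of a continuous flow on a nonempty compact metric space admitting
a continuous strict Lyapunov function, and whose fixed-point set is totally
disconnected, converges to a single fixed point as `t → +∞`. -/
theorem gradientlike_flow_trajectory_tendsto_fixed_point
    {X : Type*} [MetricSpace X] [CompactSpace X] [Nonempty X]
    (φ : ℝ → X → X)
    (hcont : Continuous fun p : ℝ × X => φ p.1 p.2)
    (hzero : ∀ x, φ 0 x = x)
    (hadd : ∀ s t x, φ (s + t) x = φ s (φ t x))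
    (V : X → ℝ) (hV : Continuous V)
    (hLyap : ∀ x, (¬ ∀ t, φ t x = x) → ∀ t, 0 < t → V x < V (φ t x))
    (hfix : IsTotallyDisconnected {x | ∀ t, φ t x = x}) :
    ∀ x : X, ∃ p : X, (∀ t, φ t p = p) ∧
      Filter.Tendsto (fun t => φ t x) Filter.atTop (nhds p) := by
  intro x
  set Φ : Flow ℝ X := ⟨φ, hcont, hadd, hzero⟩ with hΦ
  have hΦapp : ∀ t y, Φ t y = φ t y := fun _ _ => rfl
  set Ω := omegaLimit atTop φ ({x} : Set X) with hΩ
  -- trajectory is continuous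
  have htraj : Continuous fun t : ℝ => φ t x :=
    hcont.comp (continuous_id.prodMk continuous_const)
  -- Ω nonempty, closed, compact
  have hΩne : Ω.Nonempty := nonempty_omegaLimit atTop φ {x} ⟨x, rfl⟩
  have hΩclosed : IsClosed Ω := isClosed_omegaLimit atTop φ {x}
  -- Ω invariant
  have hΩinv : ∀ t, Set.MapsTo (φ t) Ω Ω := by
    have := Flow.isInvariant_omegaLimit atTop Φ {x}
      (fun t => tendsto_atTop_add_const_left atTop t tendsto_id)
    exact this
  -- V along the trajectory is monotone
  have hmono : Monotone fun t => V (φ t x) := by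
    intro s t hst
    rcases eq_or_lt_of_le hst with rfl | hlt
    · exact le_rfl
    · have hts : φ t x = φ (t - s) (φ s x) := by
        rw [← hadd]; ring_nf
      show V (φ s x) ≤ V (φ t x)
      by_cases hfx : ∀ r, φ r (φ s x) = φ s x
      · rw [hts, hfx]
      · have := hLyap (φ s x) hfx (t - s) (by linarith)
        rw [← hts] at this
        exact this.le
  -- V bounded above
  have hbdd : BddAbove (Set.range fun t => V (φ t x)) := by
    obtain ⟨C, _, hC⟩ := (isCompact_univ (X := X)).exists_isMaxOn ⟨x, trivial⟩
      hV.continuousOn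
    exact ⟨V C, by rintro _ ⟨t, rfl⟩; exact hC trivial⟩
  -- V (φ t x) converges to c
  set c := ⨆ t, V (φ t x) with hc
  have hVlim : Tendsto (fun t => V (φ t x)) atTop (𝓝 c) :=
    tendsto_atTop_ciSup hmono hbdd
  -- V = c on Ω
  have hVΩ : ∀ y ∈ Ω, V y = c := by
    intro y hy
    have hcl : MapClusterPt y atTop fun t => φ t x := by
      rw [hΩ, mem_omegaLimit_singleton_iff_map_cluster_point] at hy
      exact hy
    have hclV : MapClusterPt (V y) atTop (V ∘ fun t => φ t x) :=
      hcl.continuousAt_comp hV.continuousAt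
    have h1 : ClusterPt (V y) (Filter.map (V ∘ fun t => φ t x) atTop) := hclV
    have h2 : Filter.map (V ∘ fun t => φ t x) atTop ≤ 𝓝 c := hVlim
    have : ClusterPt (V y) (𝓝 c) := h1.mono h2
    exact eq_of_nhds_neBot this
  -- Ω consists of fixed points
  have hΩfix : Ω ⊆ {y | ∀ t, φ t y = y} := by
    intro y hy
    by_contra hnot
    have h1 : V y < V (φ 1 y) := hLyap y hnot 1 one_pos
    have h2 : φ 1 y ∈ Ω := hΩinv 1 hy
    rw [hVΩ y hy, hVΩ _ h2] at h1
    exact lt_irrefl _ h1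
  -- Ω is preconnected
  have hΩconn : IsPreconnected Ω := by
    have hΩeq : Ω = ⋂ n : ℕ, closure ((fun t => φ t x) '' Set.Ici (n : ℝ)) := by
      apply Set.Subset.antisymm
      · refine Set.subset_iInter fun n => ?_
        have : Set.Ici ((n : ℝ)) ∈ (atTop : Filter ℝ) := Ici_mem_atTop _
        calc Ω ⊆ closure (Set.image2 φ (Set.Ici (n : ℝ)) {x}) :=
              omegaLimit_subset_closure_fw_image atTop φ {x} this
          _ = closure ((fun t => φ t x) '' Set.Ici (n : ℝ)) := by
              rw [Set.image2_singleton_right]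
      · intro y hy
        simp only [hΩ, omegaLimit_def, Set.mem_iInter]
        intro u hu
        obtain ⟨a, ha⟩ := mem_atTop_sets.1 hu
        obtain ⟨n, hn⟩ := exists_nat_ge a
        have h1 : Set.Ici ((n : ℝ)) ⊆ u := fun r hr => ha r (le_trans hn hr)
        have h2 : (fun t => φ t x) '' Set.Ici ((n : ℝ)) ⊆ Set.image2 φ u {x} := by
          rintro _ ⟨t, ht, rfl⟩
          exact ⟨t, h1 ht, x, rfl, rfl⟩
        exact closure_mono h2 (Set.mem_iInter.1 hy n)
    rw [hΩeq]
    apply preconnected_iInter_of_antitone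
    · intro m n hmn
      exact closure_mono (Set.image_mono (Set.Ici_subset_Ici.2 (by exact_mod_cast hmn)))
    · intro n
      exact isClosed_closure.isCompact
    · intro n
      exact ((isPreconnected_Ici).image _ htraj.continuousOn).closure
  -- Ω is a subsingleton, hence a single fixed point
  have hsub : Ω.Subsingleton := hfix Ω hΩfix hΩconn
  obtain ⟨p, hp⟩ := hΩne
  have hΩsingle : Ω = {p} := hsub.eq_singleton_of_mem hp
  refine ⟨p, hΩfix hp, ?_⟩
  -- convergence to p
  rw [tendsto_nhds]
  intro v hv hpv
  have hΩv : Ω ⊆ v := by rw [hΩsingle]; simpa using hpv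
  have := eventually_mapsTo_of_isOpen_of_omegaLimit_subset atTop φ {x} hv hΩv
  filter_upwards [this] with t ht
  exact ht rfl
end

section
/- Let X be a nonempty compact metric space, let φ : ℝ × X → X be a continuous flow with finitely many fixed points, and let V : X → ℝ be continuous with V(φ(t, x)) > V(x) whenever x is not a fixed point and t > 0. Suppose x and x′ are fixed points for which there exist fixed points x = w₀, w₁, …, wₙ = x′ (n ≥ 1) and non-fixed points a₁, …, aₙ such that for each i, φ(t, aᵢ) → w_{i−1} as t → +∞ and φ(t, aᵢ) → wᵢ as t → −∞. Then there exists an injective continuous path Γ : [0,1] → X with Γ(0) = x and Γ(1) = x′, such that V ∘ Γ is strictly decreasing and the image Γ([0,1]) is invariant under φ (that is, φ(t, Γ(s)) ∈ Γ([0,1]) for all t ∈ ℝ and s ∈ [0,1]). -/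
/-- Existence of a monotone invariant arc joining two fixed points connected by a chain
of heteroclinic trajectories, for a continuous flow on a nonempty compact metric space
with finitely many fixed points and a continuous strict Lyapunov function. -/
theorem exists_monotone_invariant_arc_of_heteroclinic_chain
    {X : Type*} [MetricSpace X] [CompactSpace X] [Nonempty X]
    (φ : ℝ → X → X)
    (hcont : Continuous fun p : ℝ × X => φ p.1 p.2)
    (hzero : ∀ x, φ 0 x = x)
    (hadd : ∀ s t x, φ (s + t) x = φ s (φ t x))
    (hfin : {x : X | ∀ t, φ t x = x}.Finite)
    (V : X → ℝ) (hV : Continuous V)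
    (hLyap : ∀ x, (¬ ∀ t, φ t x = x) → ∀ t, 0 < t → V x < V (φ t x))
    (x x' : X) (hx : ∀ t, φ t x = x) (hx' : ∀ t, φ t x' = x')
    (n : ℕ) (hn : 1 ≤ n) (w : Fin (n + 1) → X) (a : Fin n → X)
    (hw : ∀ i, ∀ t, φ t (w i) = w i)
    (hw0 : w 0 = x) (hwn : w (Fin.last n) = x')
    (ha : ∀ i, ¬ ∀ t, φ t (a i) = a i)
    (haT : ∀ i : Fin n,
      Filter.Tendsto (fun t => φ t (a i)) Filter.atTop (nhds (w i.castSucc)))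
    (haB : ∀ i : Fin n,
      Filter.Tendsto (fun t => φ t (a i)) Filter.atBot (nhds (w i.succ))) :
    ∃ Γ : ℝ → X, ContinuousOn Γ (Set.Icc 0 1) ∧ Set.InjOn Γ (Set.Icc 0 1) ∧
      Γ 0 = x ∧ Γ 1 = x' ∧ StrictAntiOn (V ∘ Γ) (Set.Icc 0 1) ∧
      ∀ s ∈ Set.Icc (0 : ℝ) 1, ∀ t : ℝ, φ t (Γ s) ∈ Γ '' Set.Icc (0 : ℝ) 1 := by
  classical
  -- continuity of each trajectory
  have hΦcont : ∀ i : Fin n, Continuous fun t : ℝ => φ t (a i) := fun i =>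
    hcont.comp (continuous_id.prodMk continuous_const)
  -- every point on the orbit of `a i` is a non-fixed point
  have hnotfix : ∀ (i : Fin n) (t : ℝ), ¬ ∀ s, φ s (φ t (a i)) = φ t (a i) := by
    intro i t hfix
    apply ha i
    intro s
    have h1 : φ (-t) (φ t (a i)) = a i := by
      rw [← hadd]; simp [hzero]
    have h2 : ∀ s : ℝ, φ s (a i) = φ t (a i) := by
      intro s
      calc φ s (a i) = φ s (φ (-t) (φ t (a i))) := by rw [h1]
        _ = φ (s + -t) (φ t (a i)) := (hadd _ _ _).symm
        _ = φ t (a i) := hfix _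
    rw [h2 s, ← h2 0, hzero]
  -- V is strictly increasing along each trajectory
  have hmono : ∀ i : Fin n, StrictMono fun t : ℝ => V (φ t (a i)) := by
    intro i t t' htt'
    have h := hLyap (φ t (a i)) (hnotfix i t) (t' - t) (by linarith)
    rwa [← hadd, sub_add_cancel] at h
  -- limits of V along trajectories
  have hVtop : ∀ i : Fin n, Filter.Tendsto (fun t : ℝ => V (φ t (a i)))
      Filter.atTop (nhds (V (w i.castSucc))) := fun i =>
    (hV.tendsto _).comp (haT i)
  have hVbot : ∀ i : Fin n, Filter.Tendsto (fun t : ℝ => V (φ t (a i)))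
      Filter.atBot (nhds (V (w i.succ))) := fun i =>
    (hV.tendsto _).comp (haB i)
  -- strict bounds on V along trajectories
  have hub : ∀ (i : Fin n) (t : ℝ), V (φ t (a i)) < V (w i.castSucc) := by
    intro i t
    have h1 : V (φ t (a i)) < V (φ (t + 1) (a i)) := hmono i (lt_add_one t)
    have h2 : V (φ (t + 1) (a i)) ≤ V (w i.castSucc) :=
      ge_of_tendsto (hVtop i)
        (Filter.eventually_atTop.2 ⟨t + 1, fun s hs => (hmono i).monotone hs⟩)
    linarith
  have hlb : ∀ (i : Fin n) (t : ℝ), V (w i.succ) < V (φ t (a i)) := by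
    intro i t
    have h1 : V (φ (t - 1) (a i)) < V (φ t (a i)) := hmono i (by linarith)
    have h2 : V (w i.succ) ≤ V (φ (t - 1) (a i)) :=
      le_of_tendsto (hVbot i)
        (Filter.eventually_atBot.2 ⟨t - 1, fun s hs => (hmono i).monotone hs⟩)
    linarith
  -- V strictly decreases along the chain of fixed points
  have hAnti : StrictAnti fun j : Fin (n + 1) => V (w j) :=
    Fin.strictAnti_iff_succ_lt.2 fun i => (hlb i 0).trans (hub i 0)
  have hVx'x : V x' < V x := by
    rw [← hw0, ← hwn]
    exact hAnti (by simp only [Fin.lt_def, Fin.val_last, Fin.val_zero]; omega)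
  -- the candidate arc: union of orbit closures
  set C : Fin n → Set X := fun i =>
    (Set.range fun t : ℝ => φ t (a i)) ∪ {w i.castSucc, w i.succ} with hC
  set A : Set X := ⋃ i, C i with hA
  -- closure of each orbit is contained in C i
  have hCclosure : ∀ i : Fin n,
      closure (Set.range fun t : ℝ => φ t (a i)) ⊆ C i := by
    intro i p hp
    by_cases hpw : p = w i.castSucc ∨ p = w i.succ
    · exact Or.inr hpw
    push_neg at hpw
    obtain ⟨hp1, hp2⟩ := hpw
    set ε : ℝ := min (dist p (w i.castSucc)) (dist p (w i.succ)) / 2 with hε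
    have hεpos : 0 < ε := by
      have d1 : 0 < dist p (w i.castSucc) := dist_pos.2 hp1
      have d2 : 0 < dist p (w i.succ) := dist_pos.2 hp2
      have := lt_min d1 d2
      positivity
    have h2ε1 : 2 * ε ≤ dist p (w i.castSucc) := by
      have := min_le_left (dist p (w i.castSucc)) (dist p (w i.succ))
      rw [hε]; linarith
    have h2ε2 : 2 * ε ≤ dist p (w i.succ) := by
      have := min_le_right (dist p (w i.castSucc)) (dist p (w i.succ))
      rw [hε]; linarith
    obtain ⟨T1, hT1⟩ := Filter.eventually_atTop.1
      ((haT i).eventually (Metric.ball_mem_nhds _ hεpos))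
    obtain ⟨T2, hT2⟩ := Filter.eventually_atBot.1
      ((haB i).eventually (Metric.ball_mem_nhds _ hεpos))
    have hmem : p ∈ closure ((fun t : ℝ => φ t (a i)) '' Set.Icc T2 T1) := by
      rw [Metric.mem_closure_iff]
      intro δ hδ
      have hδ' : 0 < min δ ε := lt_min hδ hεpos
      obtain ⟨b, hb, hbd⟩ := Metric.mem_closure_iff.1 hp _ hδ'
      obtain ⟨t, rfl⟩ := hb
      have ht1 : t ≤ T1 := by
        by_contra hc
        push_neg at hc
        have h1 := hT1 t hc.le
        have hbd' : dist p (φ t (a i)) < ε := lt_of_lt_of_le hbd (min_le_right _ _)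
        linarith [dist_triangle p (φ t (a i)) (w i.castSucc)]
      have ht2 : T2 ≤ t := by
        by_contra hc
        push_neg at hc
        have h1 := hT2 t hc.le
        have hbd' : dist p (φ t (a i)) < ε := lt_of_lt_of_le hbd (min_le_right _ _)
        linarith [dist_triangle p (φ t (a i)) (w i.succ)]
      exact ⟨φ t (a i), ⟨t, ⟨ht2, ht1⟩, rfl⟩, lt_of_lt_of_le hbd (min_le_left _ _)⟩
    have hcomp : IsClosed ((fun t : ℝ => φ t (a i)) '' Set.Icc T2 T1) :=
      (isCompact_Icc.image (hΦcont i)).isClosed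
    rw [hcomp.closure_eq] at hmem
    obtain ⟨t, _, rfl⟩ := hmem
    exact Or.inl ⟨t, rfl⟩
  -- each C i is closed
  have hCeq : ∀ i : Fin n, C i = closure (Set.range fun t : ℝ => φ t (a i)) := by
    intro i
    apply le_antisymm
    · intro p hp
      rcases hp with hp | hp
      · exact subset_closure hp
      · rcases hp with hp | hp
        · subst hp
          exact mem_closure_of_tendsto (haT i) (Filter.Eventually.of_forall fun t => ⟨t, rfl⟩)
        · rw [Set.mem_singleton_iff] at hp
          subst hp
          exact mem_closure_of_tendsto (haB i) (Filter.Eventually.of_forall fun t => ⟨t, rfl⟩)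
    · exact hCclosure i
  have hCclosed : ∀ i : Fin n, IsClosed (C i) := fun i => by
    rw [hCeq i]; exact isClosed_closure
  have hAclosed : IsClosed A := isClosed_iUnion_of_finite hCclosed
  have hAcomp : IsCompact A := hAclosed.isCompact
  -- membership of endpoints
  have hi0 : (0 : ℕ) < n := hn
  have hxA : x ∈ A := by
    refine Set.mem_iUnion.2 ⟨⟨0, hi0⟩, Or.inr (Or.inl ?_)⟩
    have h0 : (⟨0, hi0⟩ : Fin n).castSucc = 0 := by
      ext; simp
    rw [h0, hw0]
  have hx'A : x' ∈ A := by
    have hin : n - 1 < n := by omega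
    refine Set.mem_iUnion.2 ⟨⟨n - 1, hin⟩, Or.inr (Or.inr ?_)⟩
    have h1 : (⟨n - 1, hin⟩ : Fin n).succ = Fin.last n := by
      ext; simp only [Fin.val_succ, Fin.val_last]; omega
    rw [Set.mem_singleton_iff, h1, hwn]
  -- range of V on each C i
  have hVC : ∀ (i : Fin n), ∀ p ∈ C i,
      V p ∈ Set.Icc (V (w i.succ)) (V (w i.castSucc)) := by
    intro i p hp
    rcases hp with ⟨t, rfl⟩ | hp
    · exact ⟨(hlb i t).le, (hub i t).le⟩
    · rcases hp with rfl | hp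
      · exact ⟨(hAnti (Fin.castSucc_lt_succ (i := i))).le, le_refl _⟩
      · rw [Set.mem_singleton_iff] at hp
        subst hp
        exact ⟨le_refl _, (hAnti (Fin.castSucc_lt_succ (i := i))).le⟩
  -- V is injective on A
  have hwinj : Function.Injective w := fun u v huv => by
    by_contra hne
    rcases lt_or_gt_of_ne hne with h | h
    · exact absurd (congrArg V huv) (hAnti h).ne'
    · exact absurd (congrArg V huv) (hAnti h).ne
  have key : ∀ i j : Fin n, i ≤ j → ∀ p ∈ C i, ∀ q ∈ C j, V p = V q → p = q := by
    intro i j hij p hp q hq hVeq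
    -- useful ordering facts
    have hij' : (i : ℕ) ≤ (j : ℕ) := hij
    rcases hp with ⟨t, rfl⟩ | hp
    · -- p is an orbit point of a i
      rcases hq with ⟨t', rfl⟩ | hq
      · -- q orbit point of a j
        rcases eq_or_lt_of_le hij with rfl | hlt
        · have := (hmono i).injective hVeq
          rw [this]
        · -- i < j : V q < V (w j.castSucc) ≤ V (w i.succ) < V p
          exfalso
          have h1 : V (w j.castSucc) ≤ V (w i.succ) := by
            apply hAnti.antitone
            simp only [Fin.le_def, Fin.coe_castSucc, Fin.val_succ]
            omega
          have := hlb i t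
          have := hub j t'
          linarith
      · exfalso
        rcases hq with rfl | hq
        · -- q = w j.castSucc
          rcases eq_or_lt_of_le hij with rfl | hlt
          · exact absurd hVeq (hub i t).ne
          · have h1 : V (w j.castSucc) ≤ V (w i.succ) := by
              apply hAnti.antitone; simp only [Fin.le_def, Fin.coe_castSucc, Fin.val_succ]; omega
            have := hlb i t
            linarith
        · rw [Set.mem_singleton_iff] at hq
          subst hq
          have h1 : V (w j.succ) ≤ V (w i.succ) := by
            apply hAnti.antitone; simp only [Fin.le_def, Fin.coe_castSucc, Fin.val_succ]; omega
          have := hlb i t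
          linarith
    · rcases hp with rfl | hp
      · -- p = w i.castSucc
        rcases hq with ⟨t', rfl⟩ | hq
        · exfalso
          have h1 : V (w j.castSucc) ≤ V (w i.castSucc) := by
            apply hAnti.antitone; simp only [Fin.le_def, Fin.coe_castSucc, Fin.val_succ]; omega
          have := hub j t'
          linarith
        · rcases hq with rfl | hq
          · exact congrArg w (hAnti.injective hVeq)
          · rw [Set.mem_singleton_iff] at hq
            subst hq
            exact congrArg w (hAnti.injective hVeq)
      · rw [Set.mem_singleton_iff] at hp
        subst hp
        rcases hq with ⟨t', rfl⟩ | hq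
        · exfalso
          rcases eq_or_lt_of_le hij with rfl | hlt
          · exact absurd hVeq.symm (hlb i t').ne'
          · have h1 : V (w j.castSucc) ≤ V (w i.succ) := by
              apply hAnti.antitone; simp only [Fin.le_def, Fin.coe_castSucc, Fin.val_succ]; omega
            have := hub j t'
            linarith
        · rcases hq with rfl | hq
          · exact congrArg w (hAnti.injective hVeq)
          · rw [Set.mem_singleton_iff] at hq
            subst hq
            exact congrArg w (hAnti.injective hVeq)
  have hVinj : Set.InjOn V A := by
    intro p hp q hq hVeq
    obtain ⟨i, hpCi⟩ := Set.mem_iUnion.1 hp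
    obtain ⟨j, hqCj⟩ := Set.mem_iUnion.1 hq
    rcases le_total i j with hij | hji
    · exact key i j hij p hpCi q hqCj hVeq
    · exact (key j i hji q hqCj p hpCi hVeq.symm).symm
  -- image of V on A is the interval [V x', V x]
  have hVCimg : ∀ i : Fin n,
      Set.Icc (V (w i.succ)) (V (w i.castSucc)) ⊆ V '' C i := by
    intro i v hv
    rcases eq_or_lt_of_le hv.1 with hv1 | hv1
    · exact ⟨w i.succ, Or.inr (Or.inr rfl), hv1⟩
    rcases eq_or_lt_of_le hv.2 with hv2 | hv2
    · exact ⟨w i.castSucc, Or.inr (Or.inl rfl), hv2.symm⟩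
    -- v strictly between: intermediate value
    obtain ⟨t₀, ht₀⟩ := ((hVbot i).eventually (Iio_mem_nhds hv1)).exists
    obtain ⟨t₁, ht₁⟩ := ((hVtop i).eventually (Ioi_mem_nhds hv2)).exists
    have hIVT := intermediate_value_univ t₀ t₁ (hV.comp (hΦcont i))
    have hvmem : v ∈ Set.Icc (V (φ t₀ (a i))) (V (φ t₁ (a i))) :=
      ⟨(Set.mem_Iio.1 ht₀).le, (Set.mem_Ioi.1 ht₁).le⟩
    obtain ⟨t, ht⟩ := hIVT hvmem
    exact ⟨φ t (a i), Or.inl ⟨t, rfl⟩, ht⟩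
  have hVA : V '' A = Set.Icc (V x') (V x) := by
    apply le_antisymm
    · rintro v ⟨p, hp, rfl⟩
      obtain ⟨i, hpCi⟩ := Set.mem_iUnion.1 hp
      have h1 := hVC i p hpCi
      have h2 : V x' ≤ V (w i.succ) := by
        rw [← hwn]
        apply hAnti.antitone
        simp only [Fin.le_def, Fin.val_succ, Fin.val_last]
        omega
      have h3 : V (w i.castSucc) ≤ V x := by
        rw [← hw0]
        apply hAnti.antitone
        exact Fin.zero_le _
      exact ⟨le_trans h2 h1.1, le_trans h1.2 h3⟩
    · intro v hv
      -- find the segment containing v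
      have hPn : ∃ m : ℕ, ∃ h : m < n, V (w (⟨m, h⟩ : Fin n).succ) ≤ v := by
        refine ⟨n - 1, by omega, ?_⟩
        have : (⟨n - 1, by omega⟩ : Fin n).succ = Fin.last n := by
          ext; simp only [Fin.val_succ, Fin.val_last]; omega
        rw [this, hwn]
        exact hv.1
      set m₀ := Nat.find hPn with hm₀
      obtain ⟨hm₀n, hm₀le⟩ := Nat.find_spec hPn
      set i₀ : Fin n := ⟨m₀, hm₀n⟩ with hi₀
      have hupper : v ≤ V (w i₀.castSucc) := by
        rcases Nat.eq_zero_or_pos m₀ with h0 | hpos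
        · have : i₀.castSucc = 0 := by ext; simp [hi₀, h0]
          rw [this, hw0]
          exact hv.2
        · have hmin := Nat.find_min hPn (m := m₀ - 1) (by omega)
          push_neg at hmin
          have hlt := hmin (by omega)
          have heq : (⟨m₀ - 1, by omega⟩ : Fin n).succ = i₀.castSucc := by
            ext; simp only [Fin.val_succ, Fin.coe_castSucc, hi₀]; omega
          rw [heq] at hlt
          exact hlt.le
      have : v ∈ V '' C i₀ := hVCimg i₀ ⟨hm₀le, hupper⟩
      obtain ⟨p, hpC, hpv⟩ := this
      exact ⟨p, Set.mem_iUnion.2 ⟨i₀, hpC⟩, hpv⟩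
  -- build the homeomorphism from A to the interval
  haveI : CompactSpace A := isCompact_iff_compactSpace.mp hAcomp
  have hle : V x' ≤ V x := hVx'x.le
  let f : A → Set.Icc (V x') (V x) := fun p =>
    ⟨V p, by rw [← hVA]; exact ⟨(p : X), p.2, rfl⟩⟩
  have hfcont : Continuous f :=
    Continuous.subtype_mk (hV.comp continuous_subtype_val) _
  have hfbij : Function.Bijective f := by
    constructor
    · intro p q hpq
      exact Subtype.ext (hVinj p.2 q.2 (congrArg Subtype.val hpq))
    · intro y
      have hy : (y : ℝ) ∈ V '' A := by rw [hVA]; exact y.2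
      obtain ⟨p, hpA, hpv⟩ := hy
      exact ⟨⟨p, hpA⟩, Subtype.ext hpv⟩
  let e : A ≃ Set.Icc (V x') (V x) := Equiv.ofBijective f hfbij
  have hecont : Continuous e := hfcont
  let homeo : A ≃ₜ Set.Icc (V x') (V x) := hecont.homeoOfEquivCompactToT2
  have hsymmV : ∀ y : Set.Icc (V x') (V x), V ((homeo.symm y : A) : X) = y := by
    intro y
    have h1 : homeo (homeo.symm y) = y := homeo.apply_symm_apply y
    have h2 : f (homeo.symm y) = y := h1
    exact congrArg Subtype.val h2
  -- the parametrization
  set L : ℝ → ℝ := fun s => (1 - s) * V x + s * V x' with hL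
  set Γ : ℝ → X := fun s =>
    ((homeo.symm (Set.projIcc (V x') (V x) hle (L s)) : A) : X) with hΓ
  have hLcont : Continuous L := by fun_prop
  have hΓcont : Continuous Γ :=
    continuous_subtype_val.comp
      (homeo.symm.continuous.comp (continuous_projIcc.comp hLcont))
  have hΓA : ∀ s, Γ s ∈ A := fun s =>
    (homeo.symm (Set.projIcc (V x') (V x) hle (L s))).2
  have hLmem : ∀ s ∈ Set.Icc (0 : ℝ) 1, L s ∈ Set.Icc (V x') (V x) := by
    intro s hs
    obtain ⟨hs0, hs1⟩ := hs
    simp only [hL]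
    constructor
    · nlinarith [mul_nonneg (by linarith : (0:ℝ) ≤ 1 - s) (by linarith : (0:ℝ) ≤ V x - V x')]
    · nlinarith [mul_nonneg hs0 (by linarith : (0:ℝ) ≤ V x - V x')]
  have hVΓ : ∀ s ∈ Set.Icc (0 : ℝ) 1, V (Γ s) = L s := by
    intro s hs
    rw [hΓ]
    simp only
    rw [Set.projIcc_of_mem hle (hLmem s hs), hsymmV]
  have hΓ0 : Γ 0 = x := by
    apply hVinj (hΓA 0) hxA
    rw [hVΓ 0 (by norm_num)]
    simp [hL]
  have hΓ1 : Γ 1 = x' := by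
    apply hVinj (hΓA 1) hx'A
    rw [hVΓ 1 (by norm_num)]
    simp [hL]
  have hSA : StrictAntiOn (V ∘ Γ) (Set.Icc 0 1) := by
    intro s hs s' hs' hss'
    simp only [Function.comp_apply]
    rw [hVΓ s hs, hVΓ s' hs']
    simp only [hL]
    nlinarith
  have hInj : Set.InjOn Γ (Set.Icc 0 1) := by
    intro s hs s' hs' hΓeq
    exact hSA.injOn hs hs' (by simp [Function.comp, hΓeq])
  -- invariance
  have hCinv : ∀ i : Fin n, ∀ p ∈ C i, ∀ t : ℝ, φ t p ∈ C i := by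
    intro i p hp t
    rcases hp with ⟨u, rfl⟩ | hp
    · exact Or.inl ⟨t + u, hadd t u (a i)⟩
    · rcases hp with rfl | hp
      · rw [hw]; exact Or.inr (Or.inl rfl)
      · rw [Set.mem_singleton_iff] at hp
        subst hp
        rw [hw]; exact Or.inr (Or.inr rfl)
  have hAinv : ∀ p ∈ A, ∀ t : ℝ, φ t p ∈ A := by
    intro p hp t
    obtain ⟨i, hpCi⟩ := Set.mem_iUnion.1 hp
    exact Set.mem_iUnion.2 ⟨i, hCinv i p hpCi t⟩
  have hAsub : A ⊆ Γ '' Set.Icc (0 : ℝ) 1 := by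
    intro p hp
    have hVp : V p ∈ Set.Icc (V x') (V x) := by
      rw [← hVA]; exact ⟨p, hp, rfl⟩
    have hd : 0 < V x - V x' := by linarith
    set s : ℝ := (V x - V p) / (V x - V x') with hs
    have hsmem : s ∈ Set.Icc (0 : ℝ) 1 := by
      constructor
      · apply div_nonneg _ hd.le
        linarith [hVp.2]
      · rw [div_le_one hd]
        linarith [hVp.1]
    have hLs : L s = V p := by
      simp only [hL, hs]
      field_simp [hd.ne']
      ring
    refine ⟨s, hsmem, ?_⟩
    apply hVinj (hΓA s) hp
    rw [hVΓ s hsmem, hLs]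
  refine ⟨Γ, hΓcont.continuousOn, hInj, hΓ0, hΓ1, hSA, ?_⟩
  intro s hs t
  exact hAsub (hAinv (Γ s) (hΓA s) t)
end

section
/- Let y ∈ ℂ with |y| < 1 and define, for z in the punctured unit disk 𝔻 \ {y} where 𝔻 = {z ∈ ℂ : |z| < 1}, the function G(z) = −(1/(2π))·log|(z − y)/(1 − ȳ·z)| (the minimal Green's function of the hyperbolic disk with pole y). Then: (i) G is harmonic on 𝔻 \ {y}; (ii) G(z) > 0 for all z ∈ 𝔻 \ {y}; (iii) for every ε > 0 there is δ > 0 such that G(z) < ε whenever 1 − δ < |z| < 1; and (iv) G has no critical points: ∇G(z) ≠ 0 for every z ∈ 𝔻 \ {y}. -/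
open Complex

noncomputable def Tmap (c : ℝ) : ℂ →L[ℝ] ℝ := c • Complex.reCLM

noncomputable def Lmap (c : ℝ) : ℂ →L[ℝ] ℂ →L[ℝ] ℝ :=
  (ContinuousLinearMap.compL ℝ ℂ ℂ ℝ (Tmap c)).comp (ContinuousLinearMap.mul ℝ ℂ)

@[simp] lemma Lmap_apply (c : ℝ) (d v : ℂ) : Lmap c d v = c * (d * v).re := rfl

lemma hasFDerivAt_mul_re {c : ℝ} {h : ℂ → ℂ} {z d : ℂ} (hd : HasDerivAt h d z) :
    HasFDerivAt (fun w => c * (h w).re) (Lmap c d) z := by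
  have h1 : HasFDerivAt h
      (ContinuousLinearMap.restrictScalars ℝ
        (ContinuousLinearMap.smulRight (1 : ℂ →L[ℂ] ℂ) d)) z :=
    (hd.hasFDerivAt).restrictScalars ℝ
  have h2 := (Tmap c).hasFDerivAt.comp z h1
  exact h2.congr_fderiv (by ext v; simp [Lmap, Tmap, mul_comm])

lemma analytic_package {c : ℝ} {h : ℂ → ℂ} {z₀ : ℂ} (hh : AnalyticAt ℂ h z₀) :
    ContDiffAt ℝ 2 (fun w => c * (h w).re) z₀ ∧
    fderiv ℝ (fun w => c * (h w).re) z₀ = Lmap c (deriv h z₀) ∧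
    iteratedFDeriv ℝ 2 (fun w => c * (h w).re) z₀ ![1, 1] +
      iteratedFDeriv ℝ 2 (fun w => c * (h w).re) z₀ ![Complex.I, Complex.I] = 0 := by
  set u : ℂ → ℝ := fun w => c * (h w).re with hu
  have hopen : IsOpen {z | AnalyticAt ℂ h z} := isOpen_analyticAt ℂ h
  have hAOn : AnalyticOnNhd ℂ h {z | AnalyticAt ℂ h z} := fun z hz => hz
  have hderiv : AnalyticAt ℂ (deriv h) z₀ := hAOn.deriv z₀ hh
  have hev : ∀ᶠ z in nhds z₀, fderiv ℝ u z = Lmap c (deriv h z) := by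
    filter_upwards [hh.eventually_analyticAt] with z hz
    exact (hasFDerivAt_mul_re hz.differentiableAt.hasDerivAt).fderiv
  have hd2 : HasFDerivAt (fun z => Lmap c (deriv h z))
      ((Lmap c).comp (ContinuousLinearMap.restrictScalars ℝ
        (ContinuousLinearMap.smulRight (1 : ℂ →L[ℂ] ℂ) (deriv (deriv h) z₀)))) z₀ :=
    ((Lmap c).hasFDerivAt).comp z₀
      ((hderiv.differentiableAt.hasDerivAt.hasFDerivAt).restrictScalars ℝ)
  have hfd2 : fderiv ℝ (fderiv ℝ u) z₀ =
      (Lmap c).comp (ContinuousLinearMap.restrictScalars ℝ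
        (ContinuousLinearMap.smulRight (1 : ℂ →L[ℂ] ℂ) (deriv (deriv h) z₀))) := by
    rw [Filter.EventuallyEq.fderiv_eq hev]
    exact hd2.fderiv
  refine ⟨?_, ?_, ?_⟩
  · have hcd : ContDiffAt ℝ 2 h z₀ := (hh.contDiffAt (n := 2)).restrict_scalars ℝ
    exact ((Tmap c).contDiff.contDiffAt).comp z₀ hcd
  · exact (hasFDerivAt_mul_re hh.differentiableAt.hasDerivAt).fderiv
  · rw [iteratedFDeriv_two_apply, iteratedFDeriv_two_apply, hfd2]
    simp [Complex.ext_iff]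

set_option maxHeartbeats 2000000 in
/-- The minimal Green's function `G(z) = -(1/(2π))·log|(z - y)/(1 - ȳz)|` of the
hyperbolic unit disk with pole `y`: it is harmonic and positive on the punctured disk,
tends to `0` at the boundary circle, and has no critical points. -/
theorem hyperbolic_disk_greens_function_properties
    (y : ℂ) (hy : ‖y‖ < 1) (G : ℂ → ℝ)
    (hG : ∀ z : ℂ, G z =
      -(1 / (2 * Real.pi)) *
        Real.log ‖(z - y) / (1 - (starRingEnd ℂ) y * z)‖) :
    HarmonicOnC G ({z : ℂ | ‖z‖ < 1} \ {y}) ∧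
    (∀ z ∈ ({z : ℂ | ‖z‖ < 1} \ {y}), 0 < G z) ∧
    (∀ ε : ℝ, 0 < ε → ∃ δ : ℝ, 0 < δ ∧ ∀ z : ℂ,
      1 - δ < ‖z‖ → ‖z‖ < 1 → G z < ε) ∧
    (∀ z ∈ ({z : ℂ | ‖z‖ < 1} \ {y}), gradient G z ≠ 0) := by
  have hπ : (0:ℝ) < Real.pi := Real.pi_pos
  set c : ℝ := -(1 / (2 * Real.pi)) with hc
  have hcneg : c < 0 := by
    rw [hc]
    have : (0:ℝ) < 1 / (2 * Real.pi) := by positivity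
    linarith
  set f : ℂ → ℂ := fun z => (z - y) / (1 - (starRingEnd ℂ) y * z) with hf
  set U : Set ℂ := {z : ℂ | ‖z‖ < 1} \ {y} with hU
  -- denominator nonzero
  have hden : ∀ z : ℂ, ‖z‖ < 1 → 1 - (starRingEnd ℂ) y * z ≠ 0 := by
    intro z hz h0
    have h1 : (starRingEnd ℂ) y * z = 1 := by
      have := sub_eq_zero.mp h0
      exact this.symm
    have h2 : ‖(starRingEnd ℂ) y * z‖ = 1 := by rw [h1]; simp
    rw [norm_mul, Complex.norm_conj] at h2
    nlinarith [norm_nonneg y, norm_nonneg z]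
  -- normSq identity
  have hid : ∀ z : ℂ, Complex.normSq (1 - (starRingEnd ℂ) y * z) - Complex.normSq (z - y)
      = (1 - Complex.normSq y) * (1 - Complex.normSq z) := by
    intro z
    simp only [Complex.normSq_apply, Complex.sub_re, Complex.sub_im, Complex.mul_re,
      Complex.mul_im, Complex.conj_re, Complex.conj_im, Complex.one_re, Complex.one_im]
    ring
  have hnsq_lt : ∀ z : ℂ, ‖z‖ < 1 → Complex.normSq z < 1 := by
    intro z hz
    rw [← Complex.sq_norm]
    nlinarith [norm_nonneg z]
  -- |f z| < 1 on the disk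
  have habsf : ∀ z : ℂ, ‖z‖ < 1 → ‖f z‖ < 1 := by
    intro z hz
    have hD : 0 < Complex.normSq (1 - (starRingEnd ℂ) y * z) :=
      Complex.normSq_pos.mpr (hden z hz)
    have hlt : Complex.normSq (z - y) < Complex.normSq (1 - (starRingEnd ℂ) y * z) := by
      have h1 := hid z
      have h2 := hnsq_lt z hz
      have h3 := hnsq_lt y hy
      nlinarith
    have : ‖z - y‖ < ‖1 - (starRingEnd ℂ) y * z‖ := by
      rw [Complex.norm_def, Complex.norm_def]
      exact Real.sqrt_lt_sqrt (Complex.normSq_nonneg _) hlt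
    rw [hf]
    simp only [norm_div]
    rw [div_lt_one (norm_pos_iff.mpr (hden z hz))]
    exact this
  -- f nonzero on punctured disk
  have hfne : ∀ z ∈ U, f z ≠ 0 := by
    intro z hz
    obtain ⟨hz1, hz2⟩ := hz
    have hnum : z - y ≠ 0 := sub_ne_zero.mpr hz2
    exact div_ne_zero hnum (hden z hz1)
  -- derivative of f
  have hf' : ∀ z : ℂ, ‖z‖ < 1 →
      HasDerivAt f ((1 - (starRingEnd ℂ) y * y) / (1 - (starRingEnd ℂ) y * z) ^ 2) z := by
    intro z hz
    have h1 : HasDerivAt (fun w : ℂ => w - y) 1 z := (hasDerivAt_id z).sub_const y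
    have h2 : HasDerivAt (fun w : ℂ => 1 - (starRingEnd ℂ) y * w) (-(starRingEnd ℂ) y) z := by
      simpa using ((hasDerivAt_id z).const_mul ((starRingEnd ℂ) y)).const_sub 1
    have h3 := h1.div h2 (hden z hz)
    exact h3.congr_deriv (by ring)
  have hf'ne : (1 - (starRingEnd ℂ) y * y) ≠ 0 := by
    intro h0
    have h1 : (starRingEnd ℂ) y * y = 1 := (sub_eq_zero.mp h0).symm
    have h2 : ‖(starRingEnd ℂ) y * y‖ = 1 := by rw [h1]; simp
    rw [norm_mul, Complex.norm_conj] at h2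
    nlinarith [norm_nonneg y]
  -- f is analytic on the disk
  have hfan : ∀ z : ℂ, ‖z‖ < 1 → AnalyticAt ℂ f z := by
    intro z hz
    apply AnalyticAt.div
    · exact (analyticAt_id).sub analyticAt_const
    · exact analyticAt_const.sub (analyticAt_const.mul analyticAt_id)
    · exact hden z hz
  -- key local package: holomorphic logarithm
  have key : ∀ z₀ ∈ U, ∃ h : ℂ → ℂ, AnalyticAt ℂ h z₀ ∧ (∀ z : ℂ, G z = c * (h z).re) ∧
      deriv h z₀ ≠ 0 := by
    intro z₀ hz₀
    have hz₀1 : ‖z₀‖ < 1 := hz₀.1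
    have hw0 : f z₀ ≠ 0 := hfne z₀ hz₀
    have habs0 : (0:ℝ) < ‖f z₀‖ := norm_pos_iff.mpr hw0
    set α : ℂ := (starRingEnd ℂ) (f z₀) / (‖f z₀‖ : ℂ) with hα
    have hαabs : ‖α‖ = 1 := by
      rw [hα, norm_div, Complex.norm_conj, Complex.norm_real, Real.norm_of_nonneg habs0.le, div_self habs0.ne']
    have hαne : α ≠ 0 := by
      rw [hα]
      exact div_ne_zero (star_ne_zero.mpr hw0)
        (Complex.ofReal_ne_zero.mpr habs0.ne')
    have hαf : α * f z₀ = (‖f z₀‖ : ℂ) := by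
      have h1 : (starRingEnd ℂ) (f z₀) * f z₀ = ((‖f z₀‖ ^ 2 : ℝ) : ℂ) := by
        rw [← Complex.normSq_eq_conj_mul_self, Complex.sq_norm]
      rw [hα, div_mul_eq_mul_div, h1, div_eq_iff (Complex.ofReal_ne_zero.mpr habs0.ne')]
      push_cast
      ring
    have hslit : α * f z₀ ∈ Complex.slitPlane := by
      rw [hαf]
      exact Complex.mem_slitPlane_iff.mpr (Or.inl (by simpa using habs0))
    set h : ℂ → ℂ := fun z => Complex.log (α * f z) with hh
    have hhan : AnalyticAt ℂ h z₀ :=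
      AnalyticAt.clog (analyticAt_const.mul (hfan z₀ hz₀1)) hslit
    have hGh : ∀ z : ℂ, G z = c * (h z).re := by
      intro z
      rw [hG z, hh]
      simp only [Complex.log_re, norm_mul, hαabs, one_mul]
      rfl
    have hder : HasDerivAt h ((α * f z₀)⁻¹ * (α * ((1 - (starRingEnd ℂ) y * y) /
        (1 - (starRingEnd ℂ) y * z₀) ^ 2))) z₀ := by
      have h1 : HasDerivAt (fun z => α * f z)
          (α * ((1 - (starRingEnd ℂ) y * y) / (1 - (starRingEnd ℂ) y * z₀) ^ 2)) z₀ :=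
        (hf' z₀ hz₀1).const_mul α
      exact (Complex.hasDerivAt_log hslit).comp z₀ h1
    refine ⟨h, hhan, hGh, ?_⟩
    rw [hder.deriv]
    apply mul_ne_zero
    · exact inv_ne_zero (mul_ne_zero hαne hw0)
    · exact mul_ne_zero hαne (div_ne_zero hf'ne (pow_ne_zero 2 (hden z₀ hz₀1)))
  refine ⟨⟨?_, ?_⟩, ?_, ?_, ?_⟩
  · -- ContDiffOn
    intro z₀ hz₀
    obtain ⟨h, hhan, hGh, _⟩ := key z₀ hz₀
    have : G = fun w => c * (h w).re := funext hGh
    rw [this]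
    exact ((analytic_package hhan).1).contDiffWithinAt
  · -- Laplacian
    intro z₀ hz₀
    obtain ⟨h, hhan, hGh, _⟩ := key z₀ hz₀
    have hGe : G = fun w => c * (h w).re := funext hGh
    rw [hGe]
    exact (analytic_package hhan).2.2
  · -- positivity
    intro z hz
    obtain ⟨hz1, hz2⟩ := hz
    have h1 : 0 < ‖f z‖ := norm_pos_iff.mpr (hfne z ⟨hz1, hz2⟩)
    have h2 : ‖f z‖ < 1 := habsf z hz1
    have h3 : Real.log (‖f z‖) < 0 := Real.log_neg h1 h2
    have h4 : G z = c * Real.log (‖f z‖) := hG z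
    rw [h4]
    exact mul_pos_of_neg_of_neg hcneg h3
  · -- boundary behavior
    intro ε hε
    set a : ℝ := Real.exp (-(2 * Real.pi * ε)) with ha
    have ha0 : 0 < a := Real.exp_pos _
    have ha1 : a < 1 := Real.exp_lt_one_iff.mpr (by nlinarith)
    have hy0 : (0:ℝ) ≤ ‖y‖ := norm_nonneg y
    set δ : ℝ := (1 - a ^ 2) * (1 - ‖y‖) / (4 * (1 + ‖y‖)) with hδ
    have hδ0 : 0 < δ := by
      rw [hδ]
      have : 0 < 1 - a ^ 2 := by nlinarith
      have : 0 < 1 - ‖y‖ := by linarith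
      positivity
    refine ⟨δ, hδ0, ?_⟩
    intro z hz1 hz2
    by_cases hzy : z = y
    · rw [hG z, hzy]
      simp
      positivity
    -- now z in punctured disk
    have hfz0 : 0 < ‖f z‖ := norm_pos_iff.mpr (hfne z ⟨hz2, hzy⟩)
    -- lower bound on normSq (f z)
    have hD : 0 < Complex.normSq (1 - (starRingEnd ℂ) y * z) :=
      Complex.normSq_pos.mpr (hden z hz2)
    have hDlb : (1 - ‖y‖) ^ 2 ≤ Complex.normSq (1 - (starRingEnd ℂ) y * z) := by
      have h1 : ‖(1:ℂ)‖ ≤ ‖1 - (starRingEnd ℂ) y * z‖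
          + ‖(starRingEnd ℂ) y * z‖ := by
        calc ‖(1:ℂ)‖ = ‖(1 - (starRingEnd ℂ) y * z) + (starRingEnd ℂ) y * z‖ :=
              by ring_nf
          _ ≤ _ := norm_add_le _ _
      rw [norm_one, norm_mul, Complex.norm_conj] at h1
      have h2 : 1 - ‖y‖ ≤ ‖1 - (starRingEnd ℂ) y * z‖ := by
        nlinarith [norm_nonneg y, norm_nonneg z,
          norm_nonneg (1 - (starRingEnd ℂ) y * z)]
      rw [← Complex.sq_norm]
      have h3 : 0 ≤ 1 - ‖y‖ := by linarith
      nlinarith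
    have hzlb : 1 - δ < ‖z‖ := hz1
    have hnz : 1 - Complex.normSq z < 2 * δ := by
      rw [← Complex.sq_norm]
      nlinarith [norm_nonneg z]
    have hny : 1 - Complex.normSq y = (1 - ‖y‖) * (1 + ‖y‖) := by
      rw [← Complex.sq_norm]; ring
    -- main bound
    have hy1 : 0 < 1 - ‖y‖ := by linarith
    have ha2 : 0 < 1 - a ^ 2 := by nlinarith
    have hnum_nonneg : 0 ≤ 1 - Complex.normSq z := by
      have := hnsq_lt z hz2; linarith
    have hnum_lt : (1 - Complex.normSq y) * (1 - Complex.normSq z)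
        < (1 - ‖y‖) * (1 + ‖y‖) * (2 * δ) := by
      rw [hny]
      have hpos : 0 < (1 - ‖y‖) * (1 + ‖y‖) := by nlinarith
      nlinarith [hnz, hpos, hnum_nonneg]
    have e1 : (1 - ‖y‖) * (1 + ‖y‖) * (2 * δ)
        = (1 - a ^ 2) / 2 * (1 - ‖y‖) ^ 2 := by
      rw [hδ]
      field_simp
      ring
    have hNlt : (1 - Complex.normSq y) * (1 - Complex.normSq z)
        < (1 - a ^ 2) * Complex.normSq (1 - (starRingEnd ℂ) y * z) := by
      have p1 := mul_le_mul_of_nonneg_left hDlb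
        (by positivity : (0:ℝ) ≤ (1 - a ^ 2) / 2)
      have e2 : (1 - a ^ 2) * Complex.normSq (1 - (starRingEnd ℂ) y * z)
          = 2 * ((1 - a ^ 2) / 2 * Complex.normSq (1 - (starRingEnd ℂ) y * z)) := by ring
      have p2 := mul_pos (by linarith : (0:ℝ) < (1 - a ^ 2) / 2) hD
      linarith [hnum_lt, e1, p1, p2, e2]
    have h6 : a ^ 2 < Complex.normSq (f z) := by
      have hfz : f z = (z - y) / (1 - (starRingEnd ℂ) y * z) := rfl
      rw [hfz, map_div₀, lt_div_iff₀ hD]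
      have h7 := hid z
      have e3 : (1 - a ^ 2) * Complex.normSq (1 - (starRingEnd ℂ) y * z)
          = Complex.normSq (1 - (starRingEnd ℂ) y * z)
            - a ^ 2 * Complex.normSq (1 - (starRingEnd ℂ) y * z) := by ring
      linarith [hNlt, e3, h7]
    have hfabs : a < ‖f z‖ := by
      rw [Complex.norm_def]
      exact (Real.lt_sqrt ha0.le).mpr h6
    have h7 : Real.log a < Real.log (‖f z‖) := Real.log_lt_log ha0 hfabs
    rw [ha, Real.log_exp] at h7
    have h8 : c * Real.log (‖f z‖) < c * (-(2 * Real.pi * ε)) :=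
      mul_lt_mul_of_neg_left h7 hcneg
    have h9 : c * (-(2 * Real.pi * ε)) = ε := by
      rw [hc]
      field_simp
    have h10 : G z = c * Real.log (‖f z‖) := hG z
    rw [h10]
    linarith
  · -- gradient nonzero
    intro z₀ hz₀ hgrad
    obtain ⟨h, hhan, hGh, hdne⟩ := key z₀ hz₀
    have hGe : G = fun w => c * (h w).re := funext hGh
    have hdiff : HasFDerivAt G (Lmap c (deriv h z₀)) z₀ := by
      rw [hGe]; exact hasFDerivAt_mul_re hhan.differentiableAt.hasDerivAt
    have hgr : gradient G z₀
        = (InnerProductSpace.toDual ℝ ℂ).symm (Lmap c (deriv h z₀)) :=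
      hdiff.hasGradientAt.gradient
    rw [hgrad] at hgr
    have hzero : Lmap c (deriv h z₀) = 0 := by
      have := congrArg (InnerProductSpace.toDual ℝ ℂ) hgr
      rw [map_zero, LinearIsometryEquiv.apply_symm_apply] at this
      exact this.symm
    have h1 : Lmap c (deriv h z₀) ((starRingEnd ℂ) (deriv h z₀)) = 0 := by
      rw [hzero]; rfl
    rw [Lmap_apply, Complex.mul_conj] at h1
    have h2 : Complex.normSq (deriv h z₀) ≠ 0 := fun h0 => hdne (Complex.normSq_eq_zero.mp h0)
    simp only [Complex.ofReal_re] at h1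
    rcases mul_eq_zero.mp h1 with h3 | h3
    · exact absurd h3 (ne_of_lt hcneg)
    · exact h2 h3
end

section
/- Let m ≥ 2 be an integer and k an integer, and define the vector field X : ℝ × ℝ → ℝ × ℝ by X(r, θ) = (r·cos(mθ), −sin(mθ)). Then X(0, kπ/m) = (0, 0), and the total (Fréchet) derivative of X at the point (0, kπ/m) is the linear map (a, b) ↦ ((−1)ᵏ·a, −m·(−1)ᵏ·b); in particular this linear map has determinant −m < 0, so the zero (0, kπ/m) of X is a hyperbolic saddle. -/
/-- The blown-up vector field `X(r, θ) = (r·cos(mθ), -sin(mθ))` vanishes at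
`(0, kπ/m)` and its total derivative there is `(a, b) ↦ ((-1)^k a, -m(-1)^k b)`,
a linear map of determinant `-m < 0`; hence `(0, kπ/m)` is a hyperbolic saddle. -/
theorem polar_blowup_saddle (m : ℕ) (hm : 2 ≤ m) (k : ℤ)
    (X : ℝ × ℝ → ℝ × ℝ)
    (hX : ∀ r θ : ℝ, X (r, θ) = (r * Real.cos (m * θ), -Real.sin (m * θ))) :
    X (0, k * Real.pi / m) = (0, 0) ∧
    ∃ L : ℝ × ℝ →L[ℝ] ℝ × ℝ,
      HasFDerivAt X L (0, k * Real.pi / m) ∧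
      (∀ a b : ℝ, L (a, b) = ((-1 : ℝ) ^ k * a, -(m : ℝ) * (-1 : ℝ) ^ k * b)) ∧
      LinearMap.det (L.toLinearMap) = -(m : ℝ) ∧
      -(m : ℝ) < 0 := by
  have hm0' : (0 : ℝ) < m := by
    have : 0 < m := lt_of_lt_of_le (by norm_num) hm
    exact_mod_cast this
  have hm0 : (m : ℝ) ≠ 0 := ne_of_gt hm0'
  set θ₀ : ℝ := k * Real.pi / m with hθ₀
  have hmθ : (m : ℝ) * θ₀ = k * Real.pi := by
    rw [hθ₀]; field_simp
  have hsin : Real.sin ((m : ℝ) * θ₀) = 0 := by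
    rw [hmθ]; exact Real.sin_int_mul_pi k
  have hcosv : Real.cos ((m : ℝ) * θ₀) = (-1 : ℝ) ^ k := by
    rw [hmθ]
    have := Real.cos_int_mul_pi_sub 0 k
    simpa using this
  set c : ℝ := (-1 : ℝ) ^ k with hc
  set d : ℝ := -(m : ℝ) * c with hd
  have hXF : X = fun p : ℝ × ℝ => (p.1 * Real.cos (m * p.2), -Real.sin (m * p.2)) := by
    funext p
    obtain ⟨r, θ⟩ := p
    exact hX r θ
  have hzero : X (0, θ₀) = (0, 0) := by
    rw [hX 0 θ₀]
    simp [hsin]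
  refine ⟨hzero, ?_⟩
  set L : ℝ × ℝ →L[ℝ] ℝ × ℝ :=
    (c • ContinuousLinearMap.fst ℝ ℝ ℝ).prod (d • ContinuousLinearMap.snd ℝ ℝ ℝ) with hL
  have hLapp : ∀ a b : ℝ, L (a, b) = (c * a, d * b) := by
    intro a b; simp [hL]
  -- derivative of inner map p ↦ m * p.2
  have hinner : HasFDerivAt (fun p : ℝ × ℝ => (m : ℝ) * p.2)
      ((m : ℝ) • ContinuousLinearMap.snd ℝ ℝ ℝ) (0, θ₀) :=
    (hasFDerivAt_snd.const_mul _)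
  have hcosD : HasFDerivAt (fun p : ℝ × ℝ => Real.cos ((m : ℝ) * p.2))
      ((-Real.sin ((m : ℝ) * θ₀)) • ((m : ℝ) • ContinuousLinearMap.snd ℝ ℝ ℝ)) (0, θ₀) :=
    by have := (Real.hasDerivAt_cos ((m : ℝ) * θ₀)).comp_hasFDerivAt ((0 : ℝ), θ₀) hinner; exact this
  have hsinD : HasFDerivAt (fun p : ℝ × ℝ => Real.sin ((m : ℝ) * p.2))
      ((Real.cos ((m : ℝ) * θ₀)) • ((m : ℝ) • ContinuousLinearMap.snd ℝ ℝ ℝ)) (0, θ₀) :=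
    by have := (Real.hasDerivAt_sin ((m : ℝ) * θ₀)).comp_hasFDerivAt ((0 : ℝ), θ₀) hinner; exact this
  have h1 : HasFDerivAt (fun p : ℝ × ℝ => p.1 * Real.cos ((m : ℝ) * p.2))
      (c • ContinuousLinearMap.fst ℝ ℝ ℝ) (0, θ₀) := by
    have hfst : HasFDerivAt (fun p : ℝ × ℝ => p.1) (ContinuousLinearMap.fst ℝ ℝ ℝ)
        ((0 : ℝ), θ₀) := hasFDerivAt_fst
    have := hfst.mul hcosD
    refine this.congr_fderiv ?_
    ext p <;> simp [hsin, hcosv, hc, mul_comm]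
  have h2 : HasFDerivAt (fun p : ℝ × ℝ => -Real.sin ((m : ℝ) * p.2))
      (d • ContinuousLinearMap.snd ℝ ℝ ℝ) (0, θ₀) := by
    have := hsinD.neg
    refine this.congr_fderiv ?_
    ext p <;> simp [hcosv, hd, hc] <;> ring
  have hF : HasFDerivAt X L (0, θ₀) := by
    rw [hXF, hL]
    exact h1.prodMk h2
  refine ⟨L, hF, ?_, ?_, by linarith⟩
  · intro a b
    rw [hLapp a b, hc, hd]
  · have hdet : LinearMap.det (L.toLinearMap) = c * d := by
      rw [← LinearMap.det_toMatrix (Module.Basis.finTwoProd ℝ)]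
      rw [Matrix.det_fin_two]
      simp [LinearMap.toMatrix_apply, Module.Basis.finTwoProd_zero, Module.Basis.finTwoProd_one,
        hLapp, Module.Basis.coe_finTwoProd_repr]
    rw [hdet, hd, hc]
    have hcc : ((-1 : ℝ) ^ k) * ((-1 : ℝ) ^ k) = 1 := by
      rw [← zpow_add₀ (by norm_num : (-1 : ℝ) ≠ 0)]
      have h2k : k + k = 2 * k := by ring
      rw [h2k, zpow_mul]
      norm_num
    nlinarith [hcc]
end
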